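/- Let M_k be an RKHM over ℂ^{m×m}, let x_0,…,x_T ∈ Y with {φ(x_t)}_{t=0}^{T-1} ℂ^{m×m}-linearly independent, and let W_T be the finite-dimensional submodule spanned by {φ(x_t)}_{t=0}^{T-1}. Let K be a ℂ^{m×m}-linear map with Kφ(x_t) = φ(x_{t+1}). Let Q_T be the orthonormal system obtained by exact (ε = 0) Gram–Schmidt from {φ(x_t)}_{t=0}^{T-1}, so that Q_T Q_T* is the orthogonal projection onto W_T. Then K̂ := Q_T Q_T* K Q_T Q_T* is the unique minimizer over ℂ^{m×m}-linear maps K̂ on W_T of the matrix-valued objective Σ_{t=0}^{T-1} |K̂ φ(x_t) − φ(x_{t+1})|² (with respect to the positive-semidefinite order on ℂ^{m×m}). -/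

import Mathlib

open scoped Matrix.Norms.L2Operator ComplexOrder

/-- A Hilbert C*-module over the C*-algebra `ℂ^{m×m}` of `m × m` complex matrices (with the
operator norm): a right module with a matrix-valued inner product inducing the norm of `M`. -/
structure HilbertModuleMat (m : ℕ) (M : Type*) [NormedAddCommGroup M] where
  smul : M → Matrix (Fin m) (Fin m) ℂ → M
  inner : M → M → Matrix (Fin m) (Fin m) ℂ
  smul_add_vec : ∀ (u v : M) c, smul (u + v) c = smul u c + smul v c
  smul_add_alg : ∀ (u : M) c d, smul u (c + d) = smul u c + smul u d
  smul_mul : ∀ (u : M) c d, smul u (c * d) = smul (smul u c) d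
  smul_one : ∀ u : M, smul u 1 = u
  inner_add_right : ∀ u v w : M, inner u (v + w) = inner u v + inner u w
  inner_smul_right : ∀ (u v : M) c, inner u (smul v c) = inner u v * c
  inner_conj : ∀ u v : M, inner v u = star (inner u v)
  inner_self_posSemidef : ∀ u : M, (inner u u).PosSemidef
  inner_definite : ∀ u : M, inner u u = 0 → u = 0
  norm_eq : ∀ u : M, ‖u‖ = Real.sqrt ‖inner u u‖

/-- A vector `q` is *normalized* if `⟨q,q⟩` is a nonzero idempotent. -/
def HilbertModuleMat.Normalized {m : ℕ} {M : Type*} [NormedAddCommGroup M]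
    (h : HilbertModuleMat m M) (q : M) : Prop :=
  h.inner q q ≠ 0 ∧ h.inner q q * h.inner q q = h.inner q q

/-- The `ℂ^{m×m}`-linear span of a finite family. -/
def finSpan {m T : ℕ} {M : Type*} [NormedAddCommGroup M] (h : HilbertModuleMat m M)
    (w : Fin T → M) : Set M :=
  {u : M | ∃ c : Fin T → Matrix (Fin m) (Fin m) ℂ, u = ∑ t, h.smul (w t) (c t)}

/-- The orthogonal projection onto the span of an orthonormal family. -/
def finProj {m T : ℕ} {M : Type*} [NormedAddCommGroup M] (h : HilbertModuleMat m M)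
    (q : Fin T → M) (u : M) : M :=
  ∑ t, h.smul (q t) (h.inner (q t) u)

section Aux

variable {m T : ℕ} {M : Type*} [NormedAddCommGroup M] (h : HilbertModuleMat m M)

lemma HM.smul_zero_vec (c : Matrix (Fin m) (Fin m) ℂ) : h.smul 0 c = 0 := by
  have h0 := h.smul_add_vec 0 0 c
  rw [add_zero] at h0
  exact (left_eq_add.mp h0)

lemma HM.smul_zero_alg (u : M) : h.smul u 0 = 0 := by
  have h0 := h.smul_add_alg u 0 0
  rw [add_zero] at h0
  exact (left_eq_add.mp h0)

lemma HM.inner_zero_right (u : M) : h.inner u 0 = 0 := by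
  have h0 := h.inner_add_right u 0 0
  rw [add_zero] at h0
  exact (left_eq_add.mp h0)

lemma HM.inner_zero_left (u : M) : h.inner 0 u = 0 := by
  rw [h.inner_conj, HM.inner_zero_right, star_zero]

lemma HM.inner_add_left (u v w : M) :
    h.inner (u + v) w = h.inner u w + h.inner v w := by
  rw [h.inner_conj, h.inner_add_right, star_add, ← h.inner_conj, ← h.inner_conj]

lemma HM.inner_neg_right (u v : M) : h.inner u (-v) = - h.inner u v := by
  have h0 := h.inner_add_right u v (-v)
  rw [add_neg_cancel, HM.inner_zero_right] at h0
  exact (eq_neg_of_add_eq_zero_right h0.symm)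

lemma HM.inner_sub_right (u v w : M) :
    h.inner u (v - w) = h.inner u v - h.inner u w := by
  rw [sub_eq_add_neg, h.inner_add_right, HM.inner_neg_right, sub_eq_add_neg]

lemma HM.inner_sub_left (u v w : M) :
    h.inner (u - v) w = h.inner u w - h.inner v w := by
  rw [h.inner_conj, HM.inner_sub_right, star_sub, ← h.inner_conj, ← h.inner_conj]

lemma HM.inner_smul_left (u v : M) (c : Matrix (Fin m) (Fin m) ℂ) :
    h.inner (h.smul u c) v = star c * h.inner u v := by
  rw [h.inner_conj, h.inner_smul_right, star_mul, ← h.inner_conj]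

lemma HM.inner_sum_right {ι : Type*} (s : Finset ι) (u : M) (f : ι → M) :
    h.inner u (∑ i ∈ s, f i) = ∑ i ∈ s, h.inner u (f i) := by
  classical
  induction s using Finset.induction with
  | empty => simp [HM.inner_zero_right]
  | insert _ _ hnot ih =>
      rw [Finset.sum_insert hnot, Finset.sum_insert hnot, h.inner_add_right, ih]

lemma HM.smul_sum_vec {ι : Type*} (s : Finset ι) (f : ι → M)
    (c : Matrix (Fin m) (Fin m) ℂ) :
    h.smul (∑ i ∈ s, f i) c = ∑ i ∈ s, h.smul (f i) c := by
  classical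
  induction s using Finset.induction with
  | empty => simp [HM.smul_zero_vec]
  | insert _ _ hnot ih =>
      rw [Finset.sum_insert hnot, Finset.sum_insert hnot, h.smul_add_vec, ih]

lemma HM.inner_self_herm (u : M) : star (h.inner u u) = h.inner u u :=
  (h.inner_conj u u).symm

/-- For a normalized vector, `q ⟨q,q⟩ = q`. -/
lemma HM.normalized_smul_self {q : M} (hn : h.Normalized q) :
    h.smul q (h.inner q q) = q := by
  set p := h.inner q q with hp
  have hps : star p = p := HM.inner_self_herm h q
  have hpp : p * p = p := hn.2
  have hr : h.inner (h.smul q p - q) (h.smul q p - q) = 0 := by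
    simp only [HM.inner_sub_left, HM.inner_sub_right, h.inner_smul_right,
      HM.inner_smul_left, ← hp, hps, mul_assoc, hpp]
    simp
  have := h.inner_definite _ hr
  exact sub_eq_zero.mp this

lemma finSpan_zero (w : Fin T → M) : (0 : M) ∈ finSpan h w :=
  ⟨0, by simp [HM.smul_zero_alg]⟩

lemma finSpan_add {w : Fin T → M} {u v : M} (hu : u ∈ finSpan h w)
    (hv : v ∈ finSpan h w) : u + v ∈ finSpan h w := by
  obtain ⟨c, rfl⟩ := hu
  obtain ⟨d, rfl⟩ := hv
  exact ⟨fun t => c t + d t, by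
    rw [← Finset.sum_add_distrib]
    exact Finset.sum_congr rfl fun t _ => (h.smul_add_alg _ _ _).symm⟩

lemma finSpan_smul {w : Fin T → M} {u : M} (hu : u ∈ finSpan h w)
    (c : Matrix (Fin m) (Fin m) ℂ) : h.smul u c ∈ finSpan h w := by
  obtain ⟨d, rfl⟩ := hu
  refine ⟨fun t => d t * c, ?_⟩
  rw [HM.smul_sum_vec]
  exact Finset.sum_congr rfl fun t _ => by rw [h.smul_mul]

lemma finSpan_neg {w : Fin T → M} {u : M} (hu : u ∈ finSpan h w) :
    -u ∈ finSpan h w := by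
  have hneg : h.smul u (-1) = -u := by
    have h0 := h.smul_add_alg u 1 (-1)
    rw [add_neg_cancel, HM.smul_zero_alg, h.smul_one] at h0
    exact (eq_neg_of_add_eq_zero_right h0.symm)
  rw [← hneg]
  exact finSpan_smul h hu _

lemma finSpan_sub {w : Fin T → M} {u v : M} (hu : u ∈ finSpan h w)
    (hv : v ∈ finSpan h w) : u - v ∈ finSpan h w := by
  rw [sub_eq_add_neg]
  exact finSpan_add h hu (finSpan_neg h hv)

lemma finSpan_sum {ι : Type*} {w : Fin T → M} (s : Finset ι) (f : ι → M)
    (hf : ∀ i ∈ s, f i ∈ finSpan h w) : ∑ i ∈ s, f i ∈ finSpan h w := by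
  classical
  induction s using Finset.induction with
  | empty => simpa using finSpan_zero h w
  | insert _ _ hnot ih =>
      rw [Finset.sum_insert hnot]
      exact finSpan_add h (hf _ (Finset.mem_insert_self _ _))
        (ih fun i hi => hf i (Finset.mem_insert_of_mem hi))

lemma finSpan_subset {w v : Fin T → M} (hv : ∀ s, v s ∈ finSpan h w) :
    finSpan h v ⊆ finSpan h w := by
  rintro u ⟨c, rfl⟩
  exact finSpan_sum h _ _ fun s _ => finSpan_smul h (hv s) _

lemma finProj_mem (q : Fin T → M) (u : M) : finProj h q u ∈ finSpan h q :=
  ⟨fun t => h.inner (q t) u, rfl⟩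

/-- Orthogonality of the projection residual against the span. -/
lemma proj_orth_left (q : Fin T → M)
    (hON : ∀ s t, s ≠ t → h.inner (q s) (q t) = 0)
    (hN : ∀ t, h.Normalized (q t)) (u : M) {v : M} (hv : v ∈ finSpan h q) :
    h.inner (finProj h q u - u) v = 0 := by
  obtain ⟨c, rfl⟩ := hv
  rw [HM.inner_sum_right]
  refine Finset.sum_eq_zero fun s _ => ?_
  set p := h.inner (q s) (q s) with hp
  have hps : star p = p := HM.inner_self_herm h (q s)
  have hpp : p * p = p := (hN s).2
  have hqp : h.smul (q s) (p * c s) = h.smul (q s) (c s) := by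
    rw [h.smul_mul, HM.normalized_smul_self h (hN s)]
  have hinPu : h.inner (q s) (finProj h q u) = p * h.inner (q s) u := by
    rw [finProj, HM.inner_sum_right]
    rw [Finset.sum_eq_single s
      (fun r _ hr => by rw [h.inner_smul_right, hON s r (Ne.symm hr), zero_mul])
      (fun hs => absurd (Finset.mem_univ s) hs)]
    rw [h.inner_smul_right, ← hp]
  have hkey : h.inner (finProj h q u - u) (q s) * p = 0 := by
    rw [HM.inner_sub_left, h.inner_conj (q s) (finProj h q u), hinPu,
      h.inner_conj (q s) u, star_mul, hps, sub_mul, mul_assoc, hpp, sub_self]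
  rw [← hqp, h.inner_smul_right, ← mul_assoc, hkey, zero_mul]

lemma proj_orth_right (q : Fin T → M)
    (hON : ∀ s t, s ≠ t → h.inner (q s) (q t) = 0)
    (hN : ∀ t, h.Normalized (q t)) (u : M) {v : M} (hv : v ∈ finSpan h q) :
    h.inner v (finProj h q u - u) = 0 := by
  rw [h.inner_conj, proj_orth_left h q hON hN u hv, star_zero]

open Matrix in
/-- A family of PSD matrices summing to zero is identically zero. -/
lemma psd_sum_eq_zero {ι : Type*} {n : ℕ} (s : Finset ι)
    (A : ι → Matrix (Fin n) (Fin n) ℂ) (hA : ∀ t ∈ s, (A t).PosSemidef)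
    (hsum : ∑ t ∈ s, A t = 0) : ∀ t ∈ s, A t = 0 := by
  classical
  intro t ht
  have key : ∀ x : Fin n → ℂ, (A t) *ᵥ x = 0 := by
    intro x
    have h1 : ∑ r ∈ s, (star x ⬝ᵥ (A r) *ᵥ x) = 0 := by
      have h2 : ∀ (s' : Finset ι), ∑ r ∈ s', (star x ⬝ᵥ (A r) *ᵥ x)
          = star x ⬝ᵥ (∑ r ∈ s', A r) *ᵥ x := by
        intro s'
        induction s' using Finset.induction with
        | empty => simp [Matrix.zero_mulVec]
        | insert _ _ hnot ih =>
            rw [Finset.sum_insert hnot, Finset.sum_insert hnot, ih,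
              Matrix.add_mulVec, dotProduct_add]
      rw [h2, hsum, Matrix.zero_mulVec, dotProduct_zero]
    have h3 := (Finset.sum_eq_zero_iff_of_nonneg
      (fun r hr => (hA r hr).dotProduct_mulVec_nonneg x)).mp h1 t ht
    exact ((hA t ht).dotProduct_mulVec_zero_iff x).mp h3
  ext i j
  have := congrFun (key (Pi.single j 1)) i
  simpa using this

end Aux

theorem perron_frobenius_estimation_min
    {m T : ℕ} {M : Type*} [NormedAddCommGroup M] [CompleteSpace M]
    (h : HilbertModuleMat m M) (w : Fin (T + 1) → M)
    (hindep : ∀ c : Fin T → Matrix (Fin m) (Fin m) ℂ,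
      ∑ t : Fin T, h.smul (w t.castSucc) (c t) = 0 → ∀ t, c t = 0)
    (q : Fin T → M)
    (hON : ∀ s t, s ≠ t → h.inner (q s) (q t) = 0)
    (hN : ∀ t, h.Normalized (q t))
    (hqW : ∀ t, q t ∈ finSpan h (fun t : Fin T => w t.castSucc))
    (hWq : ∀ t : Fin T, w t.castSucc ∈ finSpan h q) :
    (∀ t : Fin T, finProj h q (w t.succ) ∈ finSpan h (fun t : Fin T => w t.castSucc)) ∧
    ∀ F : Fin T → M, (∀ t, F t ∈ finSpan h (fun t : Fin T => w t.castSucc)) →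
      ((∑ t : Fin T,
          (h.inner (F t - w t.succ) (F t - w t.succ) -
            h.inner (finProj h q (w t.succ) - w t.succ)
              (finProj h q (w t.succ) - w t.succ))).PosSemidef ∧
      ((∑ t : Fin T, h.inner (F t - w t.succ) (F t - w t.succ)) =
          (∑ t : Fin T, h.inner (finProj h q (w t.succ) - w t.succ)
            (finProj h q (w t.succ) - w t.succ)) →
        ∀ t, F t = finProj h q (w t.succ))) := by
  constructor
  · intro t
    exact finSpan_sum h _ _ fun s _ => finSpan_smul h (hqW s) _
  intro F hF
  -- F t lies in the span of q
  have hFq : ∀ t, F t ∈ finSpan h q :=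
    fun t => finSpan_subset h hWq (hF t)
  -- error decomposition
  set e := fun t : Fin T => F t - finProj h q (w t.succ) with he
  have heq : ∀ t, e t ∈ finSpan h q :=
    fun t => finSpan_sub h (hFq t) (finProj_mem h q _)
  have key : ∀ t : Fin T,
      h.inner (F t - w t.succ) (F t - w t.succ) =
        h.inner (e t) (e t) +
          h.inner (finProj h q (w t.succ) - w t.succ)
            (finProj h q (w t.succ) - w t.succ) := by
    intro t
    have hdecomp : F t - w t.succ = e t + (finProj h q (w t.succ) - w t.succ) := by
      rw [he]; exact (sub_add_sub_cancel _ _ _).symm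
    rw [hdecomp, HM.inner_add_left, h.inner_add_right, h.inner_add_right,
      proj_orth_right h q hON hN _ (heq t),
      proj_orth_left h q hON hN _ (heq t)]
    abel
  have hsum_eq : (∑ t : Fin T,
      (h.inner (F t - w t.succ) (F t - w t.succ) -
        h.inner (finProj h q (w t.succ) - w t.succ)
          (finProj h q (w t.succ) - w t.succ))) =
      ∑ t : Fin T, h.inner (e t) (e t) := by
    refine Finset.sum_congr rfl fun t _ => ?_
    rw [key t]; abel
  constructor
  · rw [hsum_eq]
    exact Finset.sum_induction _ _ (fun a b ha hb => ha.add hb)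
      Matrix.PosSemidef.zero (fun t _ => h.inner_self_posSemidef (e t))
  · intro hmin t
    have hzero : ∑ t : Fin T, h.inner (e t) (e t) = 0 := by
      rw [← hsum_eq, Finset.sum_sub_distrib, hmin, sub_self]
    have := psd_sum_eq_zero Finset.univ _
      (fun t _ => h.inner_self_posSemidef (e t)) hzero t (Finset.mem_univ t)
    have := h.inner_definite _ this
    rw [he] at this
    exact sub_eq_zero.mp this
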